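/- (Theorem 5.2(iii), two decision makers.) If the static policy (γ₁*, δ₂*) with δ₂* : Y₁ × Ŷ → U₂ is person-by-person optimal for J^S (i.e., J^S(γ₁*, δ₂*) ≤ J^S(γ₁, δ₂*) for every measurable γ₁ : Y₁ → U₁ and J^S(γ₁*, δ₂*) ≤ J^S(γ₁*, δ₂) for every measurable δ₂ : Y₁ × Ŷ → U₂), then the control-sharing static policy (γ₁*; δ̃₂*), where δ̃₂*(y, u, s) := δ₂*(y, s) ignores the shared action, is person-by-person optimal for J^{CS}: J^{CS}(γ₁*, δ̃₂*) ≤ J^{CS}(γ₁, δ̃₂*) for every measurable γ₁, and J^{CS}(γ₁*, δ̃₂*) ≤ J^{CS}(γ₁*, β) for every measurable β : Y₁ × U₁ × Ŷ → U₂. -/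
import Mathlib


open MeasureTheory
open scoped ENNReal

/-- **Theorem 5.2(iii) (two decision makers).** If the static policy `(γ₁s, δ₂s)` is
person-by-person optimal for `JS`, then the control-sharing static policy
`(γ₁s, (y, u, s) ↦ δ₂s (y, s))` (which ignores the shared action) is person-by-person
optimal for `JCS`. -/
theorem pbp_static_to_control_sharing_static
    {Ω Ω₀ Y₁ Yh U₁ U₂ : Type*}
    [MeasurableSpace Ω] [MeasurableSpace Ω₀] [MeasurableSpace Y₁]
    [MeasurableSpace Yh] [MeasurableSpace U₁] [MeasurableSpace U₂]
    (P : Measure Ω) [IsProbabilityMeasure P]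
    (ω₀ : Ω → Ω₀) (y₁ : Ω → Y₁) (yhat₂ : Ω → Yh)
    (hω₀ : Measurable ω₀) (hy₁ : Measurable y₁) (hyhat₂ : Measurable yhat₂)
    (c : Ω₀ × U₁ × U₂ → ℝ≥0∞) (hc : Measurable c)
    (JS : (Y₁ → U₁) → (Y₁ × Yh → U₂) → ℝ≥0∞)
    (JCS : (Y₁ → U₁) → (Y₁ × U₁ × Yh → U₂) → ℝ≥0∞)
    (hJS : ∀ γ₁ δ₂, JS γ₁ δ₂
      = ∫⁻ ω, c (ω₀ ω, γ₁ (y₁ ω), δ₂ (y₁ ω, yhat₂ ω)) ∂P)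
    (hJCS : ∀ γ₁ δ₂cs, JCS γ₁ δ₂cs
      = ∫⁻ ω, c (ω₀ ω, γ₁ (y₁ ω), δ₂cs (y₁ ω, γ₁ (y₁ ω), yhat₂ ω)) ∂P)
    (γ₁s : Y₁ → U₁) (δ₂s : Y₁ × Yh → U₂)
    (hγ₁s : Measurable γ₁s) (hδ₂s : Measurable δ₂s)
    (hpbp₁ : ∀ γ₁ : Y₁ → U₁, Measurable γ₁ → JS γ₁s δ₂s ≤ JS γ₁ δ₂s)
    (hpbp₂ : ∀ δ₂ : Y₁ × Yh → U₂, Measurable δ₂ → JS γ₁s δ₂s ≤ JS γ₁s δ₂) :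
    (∀ γ₁ : Y₁ → U₁, Measurable γ₁ →
      JCS γ₁s (fun q => δ₂s (q.1, q.2.2)) ≤ JCS γ₁ (fun q => δ₂s (q.1, q.2.2)))
    ∧ (∀ β : Y₁ × U₁ × Yh → U₂, Measurable β →
      JCS γ₁s (fun q => δ₂s (q.1, q.2.2)) ≤ JCS γ₁s β) := by
  have hkey : ∀ γ₁ : Y₁ → U₁,
      JCS γ₁ (fun q => δ₂s (q.1, q.2.2)) = JS γ₁ δ₂s := by
    intro γ₁; rw [hJCS, hJS]
  constructor
  · intro γ₁ hγ₁
    rw [hkey, hkey]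
    exact hpbp₁ γ₁ hγ₁
  · intro β hβ
    have h2 : JCS γ₁s β = JS γ₁s (fun p => β (p.1, γ₁s p.1, p.2)) := by
      rw [hJCS, hJS]
    rw [hkey, h2]
    exact hpbp₂ _ (hβ.comp (measurable_fst.prodMk
      ((hγ₁s.comp measurable_fst).prodMk measurable_snd)))
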